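/- If a polynomial translation surface (f, g polynomials) has vanishing second Gaussian curvature numerator num ≡ 0 (with num defined via α = f', β = g'), then f'' ≡ 0 or g'' ≡ 0, i.e., the surface is a cylinder. -/

import Mathlib

open Polynomial

/-- Numerator of the second Gaussian curvature `K_II = num/(4Δ^{3/2})` of the translation
surface with `α = f'`, `β = g'`. -/
noncomputable def numKII (α β : ℝ → ℝ) (u v : ℝ) : ℝ :=
  -2 * α u ^ 2 * deriv α u ^ 2 * deriv β v - 2 * deriv α u * β v ^ 2 * deriv β v ^ 2 +
    2 * α u ^ 2 * deriv α u * deriv β v ^ 2 + 2 * deriv α u ^ 2 * β v ^ 2 * deriv β v +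
    2 * deriv α u * deriv β v ^ 2 + 2 * deriv α u ^ 2 * deriv β v +
    deriv α u * β v * deriv (deriv β) v + α u * deriv (deriv α) u * deriv β v +
    α u ^ 2 * deriv α u * β v * deriv (deriv β) v +
    α u * deriv (deriv α) u * β v ^ 2 * deriv β v +
    deriv α u * β v ^ 3 * deriv (deriv β) v + α u ^ 3 * deriv (deriv α) u * deriv β v

private lemma numKII_symm (α β : ℝ → ℝ) (u v : ℝ) : numKII α β u v = numKII β α v u := by
  unfold numKII; ring

private lemma numKII_poly (A B : ℝ[X]) (u v : ℝ) :
    numKII (fun x => A.eval x) (fun y => B.eval y) u v =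
      -2 * A.eval u ^ 2 * A.derivative.eval u ^ 2 * B.derivative.eval v -
        2 * A.derivative.eval u * B.eval v ^ 2 * B.derivative.eval v ^ 2 +
        2 * A.eval u ^ 2 * A.derivative.eval u * B.derivative.eval v ^ 2 +
        2 * A.derivative.eval u ^ 2 * B.eval v ^ 2 * B.derivative.eval v +
        2 * A.derivative.eval u * B.derivative.eval v ^ 2 +
        2 * A.derivative.eval u ^ 2 * B.derivative.eval v +
        A.derivative.eval u * B.eval v * B.derivative.derivative.eval v +
        A.eval u * A.derivative.derivative.eval u * B.derivative.eval v +
        A.eval u ^ 2 * A.derivative.eval u * B.eval v * B.derivative.derivative.eval v +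
        A.eval u * A.derivative.derivative.eval u * B.eval v ^ 2 * B.derivative.eval v +
        A.derivative.eval u * B.eval v ^ 3 * B.derivative.derivative.eval v +
        A.eval u ^ 3 * A.derivative.derivative.eval u * B.derivative.eval v := by
  have hA : deriv (fun x => A.eval x) = fun x => A.derivative.eval x :=
    funext fun x => Polynomial.deriv _
  have hA2 : deriv (fun x => A.derivative.eval x) = fun x => A.derivative.derivative.eval x :=
    funext fun x => Polynomial.deriv _
  have hB : deriv (fun y => B.eval y) = fun y => B.derivative.eval y :=
    funext fun y => Polynomial.deriv _
  have hB2 : deriv (fun y => B.derivative.eval y) = fun y => B.derivative.derivative.eval y :=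
    funext fun y => Polynomial.deriv _
  rw [numKII, hA, hA2, hB, hB2]

/-- Key lemma: if `deg A ≥ 2` then `derivative B = 0`. -/
private lemma key (A B : ℝ[X]) (hA : 2 ≤ A.natDegree)
    (h : ∀ u v : ℝ, numKII (fun x => A.eval x) (fun y => B.eval y) u v = 0) :
    derivative B = 0 := by
  have hnum : ∀ u v : ℝ,
      -2 * A.eval u ^ 2 * A.derivative.eval u ^ 2 * B.derivative.eval v -
        2 * A.derivative.eval u * B.eval v ^ 2 * B.derivative.eval v ^ 2 +
        2 * A.eval u ^ 2 * A.derivative.eval u * B.derivative.eval v ^ 2 +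
        2 * A.derivative.eval u ^ 2 * B.eval v ^ 2 * B.derivative.eval v +
        2 * A.derivative.eval u * B.derivative.eval v ^ 2 +
        2 * A.derivative.eval u ^ 2 * B.derivative.eval v +
        A.derivative.eval u * B.eval v * B.derivative.derivative.eval v +
        A.eval u * A.derivative.derivative.eval u * B.derivative.eval v +
        A.eval u ^ 2 * A.derivative.eval u * B.eval v * B.derivative.derivative.eval v +
        A.eval u * A.derivative.derivative.eval u * B.eval v ^ 2 * B.derivative.eval v +
        A.derivative.eval u * B.eval v ^ 3 * B.derivative.derivative.eval v +
        A.eval u ^ 3 * A.derivative.derivative.eval u * B.derivative.eval v = 0 :=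
    fun u v => (numKII_poly A B u v).symm.trans (h u v)
  set m := A.natDegree with hm
  have hA0 : A ≠ 0 := by
    intro h0
    have : A.natDegree = 0 := by rw [h0, natDegree_zero]
    omega
  set a := A.leadingCoeff with hadef
  have ha : a ≠ 0 := leadingCoeff_ne_zero.mpr hA0
  set A1 := derivative A with hA1s
  set A2 := derivative A1 with hA2s
  -- coefficients and degrees of derivatives
  have hc1 : A1.coeff (m - 1) = m * a := by
    rw [hA1s, coeff_derivative, Nat.sub_add_cancel (by omega : 1 ≤ m)]
    have hcast : ((m - 1 : ℕ) : ℝ) + 1 = (m : ℝ) := by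
      push_cast [Nat.cast_sub (by omega : 1 ≤ m)]; ring
    rw [hcast, hadef, Polynomial.leadingCoeff, ← hm]; ring
  have hc1ne : A1.coeff (m - 1) ≠ 0 := by
    rw [hc1]
    exact mul_ne_zero (Nat.cast_ne_zero.mpr (by omega)) ha
  have hd1 : A1.natDegree = m - 1 :=
    le_antisymm (natDegree_derivative_le A) (le_natDegree_of_ne_zero hc1ne)
  have hl1 : A1.leadingCoeff = m * a := by
    rw [Polynomial.leadingCoeff, hd1, hc1]
  have hc2 : A2.coeff (m - 2) = ((m : ℝ) - 1) * (m * a) := by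
    rw [hA2s, coeff_derivative, show m - 2 + 1 = m - 1 by omega, hc1]
    have hcast : ((m - 2 : ℕ) : ℝ) + 1 = (m : ℝ) - 1 := by
      push_cast [Nat.cast_sub (by omega : 2 ≤ m)]; ring
    rw [hcast]; ring
  have hmne : ((m : ℝ) - 1) ≠ 0 := by
    have : (2 : ℝ) ≤ (m : ℝ) := by exact_mod_cast hA
    linarith
  have hc2ne : A2.coeff (m - 2) ≠ 0 := by
    rw [hc2]
    exact mul_ne_zero hmne (mul_ne_zero (Nat.cast_ne_zero.mpr (by omega)) ha)
  have hd2 : A2.natDegree = m - 2 := by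
    refine le_antisymm ?_ (le_natDegree_of_ne_zero hc2ne)
    have h9 := natDegree_derivative_le A1
    rw [← hA2s, hd1] at h9
    omega
  have hl2 : A2.leadingCoeff = ((m : ℝ) - 1) * (m * a) := by
    rw [Polynomial.leadingCoeff, hd2, hc2]
  -- top coefficients of the two dominant products
  have hp1 : (A ^ 2 * A1 ^ 2).coeff (4 * m - 2) = (m : ℝ) ^ 2 * a ^ 4 := by
    have h1 : (A ^ 2).natDegree = 2 * m := by rw [natDegree_pow]
    have h2 : (A1 ^ 2).natDegree = 2 * (m - 1) := by rw [natDegree_pow, hd1]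
    have hcc := coeff_mul_degree_add_degree (A ^ 2) (A1 ^ 2)
    rw [h1, h2, show 2 * m + 2 * (m - 1) = 4 * m - 2 by omega] at hcc
    rw [hcc, leadingCoeff_pow, leadingCoeff_pow, hl1, ← hadef]
    ring_nf
  have hp2 : (A ^ 3 * A2).coeff (4 * m - 2) = ((m : ℝ) - 1) * m * a ^ 4 := by
    have h1 : (A ^ 3).natDegree = 3 * m := by rw [natDegree_pow]
    have hcc := coeff_mul_degree_add_degree (A ^ 3) A2
    rw [h1, hd2, show 3 * m + (m - 2) = 4 * m - 2 by omega] at hcc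
    rw [hcc, leadingCoeff_pow, hl2, ← hadef]
    ring_nf
  -- degree bounds for all remaining terms
  have hz : ∀ p : ℝ[X], p.natDegree < 4 * m - 2 → p.coeff (4 * m - 2) = 0 :=
    fun p hp => coeff_eq_zero_of_natDegree_lt hp
  have hzA1 : A1.coeff (4 * m - 2) = 0 := hz _ (by rw [hd1]; omega)
  have hzA1sq : (A1 ^ 2).coeff (4 * m - 2) = 0 := by
    refine hz _ ?_
    calc (A1 ^ 2).natDegree = 2 * (m - 1) := by rw [natDegree_pow, hd1]
    _ < 4 * m - 2 := by omega
  have hzAA2 : (A * A2).coeff (4 * m - 2) = 0 := by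
    refine hz _ (lt_of_le_of_lt natDegree_mul_le ?_)
    rw [hd2, ← hm]; omega
  have hzA2A1 : (A ^ 2 * A1).coeff (4 * m - 2) = 0 := by
    refine hz _ (lt_of_le_of_lt natDegree_mul_le ?_)
    rw [natDegree_pow, hd1, ← hm]; omega
  -- for each v, the `u`-polynomial obtained from num vanishes; look at coeff (4m-2)
  have hb1 : ∀ v : ℝ, (derivative B).eval v = 0 := by
    intro v
    have hQ : C ((derivative B).eval v) *
          (C 2 * A1 ^ 2 - C 2 * (A ^ 2 * A1 ^ 2) + A * A2 + A ^ 3 * A2) +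
        C (((derivative B).eval v) ^ 2) * (C 2 * (A ^ 2 * A1) + C 2 * A1) +
        C ((B.eval v) ^ 2 * ((derivative B).eval v)) * (C 2 * A1 ^ 2 + A * A2) +
        C ((B.eval v) ^ 2 * ((derivative B).eval v) ^ 2) * (C (-2) * A1) +
        C ((B.eval v) * ((derivative (derivative B)).eval v)) * (A1 + A ^ 2 * A1) +
        C ((B.eval v) ^ 3 * ((derivative (derivative B)).eval v)) * A1 = 0 := by
      apply Polynomial.funext
      intro u
      simp only [eval_add, eval_mul, eval_sub, eval_pow, eval_C, eval_zero, hA1s, hA2s]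
      linear_combination hnum u v
    have hk := congrArg (fun p : ℝ[X] => p.coeff (4 * m - 2)) hQ
    simp only [coeff_add, coeff_sub, coeff_C_mul, coeff_zero, coeff_mul_C] at hk
    rw [hp1, hp2, hzA1, hzA1sq, hzAA2, hzA2A1] at hk
    have hcoef : (m : ℝ) * ((m : ℝ) + 1) * a ^ 4 ≠ 0 := by
      have hm0 : (m : ℝ) ≠ 0 := Nat.cast_ne_zero.mpr (by omega)
      have hm1 : (m : ℝ) + 1 ≠ 0 := by positivity
      exact mul_ne_zero (mul_ne_zero hm0 hm1) (pow_ne_zero 4 ha)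
    have : (derivative B).eval v * ((m : ℝ) * ((m : ℝ) + 1) * a ^ 4) = 0 := by
      linear_combination -hk
    exact (mul_eq_zero.mp this).resolve_right hcoef
  apply Polynomial.funext
  intro r
  rw [hb1 r, eval_zero]

/-- The remaining case: both `f'` and `g'` of degree ≤ 1 but nonconstant is impossible. -/
private lemma small (A B : ℝ[X]) (hA : A.natDegree ≤ 1) (hB : B.natDegree ≤ 1)
    (hA1 : derivative A ≠ 0) (hB1 : derivative B ≠ 0)
    (h : ∀ u v : ℝ, numKII (fun x => A.eval x) (fun y => B.eval y) u v = 0) : False := by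
  have hAf := eq_X_add_C_of_natDegree_le_one hA
  have hBf := eq_X_add_C_of_natDegree_le_one hB
  have hda : derivative A = C (A.coeff 1) := by
    conv_lhs => rw [hAf]
    simp
  have hdb : derivative B = C (B.coeff 1) := by
    conv_lhs => rw [hBf]
    simp
  have ha1 : A.coeff 1 ≠ 0 := by
    intro h0; exact hA1 (by rw [hda, h0, map_zero])
  have hc1 : B.coeff 1 ≠ 0 := by
    intro h0; exact hB1 (by rw [hdb, h0, map_zero])
  have eA : A.eval ((1 - A.coeff 0) / A.coeff 1) = 1 := by
    conv_lhs => rw [hAf]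
    simp only [eval_add, eval_mul, eval_C, eval_X]
    rw [← hAf]
    field_simp
    ring
  have eB : B.eval (-(B.coeff 0) / B.coeff 1) = 0 := by
    conv_lhs => rw [hBf]
    simp only [eval_add, eval_mul, eval_C, eval_X]
    rw [← hBf]
    field_simp
    ring
  have key := (numKII_poly A B ((1 - A.coeff 0) / A.coeff 1) (-(B.coeff 0) / B.coeff 1)).symm.trans
    (h ((1 - A.coeff 0) / A.coeff 1) (-(B.coeff 0) / B.coeff 1))
  rw [hda, hdb] at key
  simp only [derivative_C, eval_zero, eval_C, eA, eB] at key
  have : A.coeff 1 * (B.coeff 1) ^ 2 ≠ 0 := mul_ne_zero ha1 (pow_ne_zero 2 hc1)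
  apply this
  linarith [key]

/-- If a polynomial translation surface (`f, g` polynomials) has vanishing second Gaussian
curvature numerator, then `f'' ≡ 0` or `g'' ≡ 0`, i.e. the surface is a cylinder. -/
theorem stmt_17 (f g : Polynomial ℝ)
    (h : ∀ u v : ℝ,
      numKII (fun x => f.derivative.eval x) (fun y => g.derivative.eval y) u v = 0) :
    derivative (derivative f) = 0 ∨ derivative (derivative g) = 0 := by
  by_contra hc
  push_neg at hc
  obtain ⟨hf, hg⟩ := hc
  have hsymm : ∀ v u : ℝ,
      numKII (fun y => g.derivative.eval y) (fun x => f.derivative.eval x) v u = 0 := by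
    intro v u
    rw [← numKII_symm]
    exact h u v
  rcases le_or_gt (derivative f).natDegree 1 with h1 | h1
  · rcases le_or_gt (derivative g).natDegree 1 with h2 | h2
    · exact small (derivative f) (derivative g) h1 h2 hf hg h
    · exact hf (key (derivative g) (derivative f) h2 hsymm)
  · exact hg (key (derivative f) (derivative g) h1 h)
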